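/- Let R = C{x,y,z}/(f) (or any commutative ring containing elements x,y,z,f_x,f_y,f_z with f = x f_x + y f_y + z f_z). Define the 4×4 matrices C = [[0, f_z, -f_y, x],[-f_z, 0, f_x, y],[f_y, -f_x, 0, z],[-x, -y, -z, 0]] and D = [[0, -z, y, -f_x],[z, 0, -x, -f_y],[-y, x, 0, -f_z],[f_x, f_y, f_z, 0]]. Then C·D = D·C = f·Id_4, i.e., (C,D) is a matrix factorization of f. -/
import Mathlib


/-- If `f = x*fx + y*fy + z*fz` in a commutative ring `R`, then the pair of
4×4 matrices `(C, D)` below is a matrix factorization of `f`: `C·D = D·C = f·Id₄`. -/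
theorem stmt_3 {R : Type*} [CommRing R] (x y z fx fy fz f : R)
    (hf : f = x * fx + y * fy + z * fz) :
    let C : Matrix (Fin 4) (Fin 4) R :=
      !![0, fz, -fy, x; -fz, 0, fx, y; fy, -fx, 0, z; -x, -y, -z, 0]
    let D : Matrix (Fin 4) (Fin 4) R :=
      !![0, -z, y, -fx; z, 0, -x, -fy; -y, x, 0, -fz; fx, fy, fz, 0]
    C * D = f • (1 : Matrix (Fin 4) (Fin 4) R) ∧
      D * C = f • (1 : Matrix (Fin 4) (Fin 4) R) := by
  subst hf
  constructor <;>
  · ext i j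
    fin_cases i <;> fin_cases j <;>
      simp [Matrix.mul_apply, Fin.sum_univ_succ, Matrix.one_apply] <;> ring
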